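/- Refraction by a decreasing potential: set T_ε := ε^(-1-1/100)/v₀, A₀ := a(-ε·v₀·T_ε), c₀ := 1 - v₀²/(4·λ₀), and c_∞ := (a₀/A₀)^(4/(5-m)). Assume c₀ < c_∞. Then the system V' = ε·8·a'(ε·U)·C/((m+3)·a(ε·U)), C' = ε·4·a'(ε·U)·C·V/((5-m)·a(ε·U)), U' = V, with initial data V(-T_ε) = v₀, C(-T_ε) = 1, U(-T_ε) = -v₀·T_ε, has a unique global C¹ solution on [-T_ε, ∞); moreover V(t) > 0 for all t ≥ -T_ε, U(t) → +∞, C(t) → c_∞, and V(t) → (4·λ₀·(c_∞ - c₀))^(1/2) > 0 as t → +∞. -/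

import Mathlib

open Real Set Filter


lemma const_of_deriv_zero_Ici {f : ℝ → ℝ} {t₀ : ℝ} (hc : ContinuousOn f (Ici t₀))
    (hd : ∀ t ∈ Ici t₀, HasDerivWithinAt f 0 (Ici t₀) t) : ∀ t ∈ Ici t₀, f t = f t₀ := by
  intro t ht
  refine constant_of_has_deriv_right_zero (hc.mono Icc_subset_Ici_self) ?_ t ⟨ht, le_rfl⟩
  intro x hx
  exact (hd x hx.1).mono (Ici_subset_Ici.mpr hx.1)

lemma contDiff_of_hasDerivAt_continuous {f g : ℝ → ℝ} (h : ∀ t, HasDerivAt f (g t) t)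
    (hg : Continuous g) : ContDiff ℝ 1 f := by
  rw [contDiff_one_iff_deriv]
  refine ⟨fun t => (h t).differentiableAt, ?_⟩
  have : deriv f = g := funext fun t => (h t).deriv
  rwa [this]


/-- Global solution of `U' = F(U)` when `F` is continuous and pinched between
positive constants. -/
lemma exists_global_ode_sol (F : ℝ → ℝ) (hF : Continuous F) (δ M u₀ t₀ : ℝ) (hδ : 0 < δ)
    (hlb : ∀ u, δ ≤ F u) (hub : ∀ u, F u ≤ M) :
    ∃ U : ℝ → ℝ, U t₀ = u₀ ∧ (∀ t, HasDerivAt U (F (U t)) t) ∧ Tendsto U atTop atTop := by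
  have hFpos : ∀ u, 0 < F u := fun u => lt_of_lt_of_le hδ (hlb u)
  have hFne : ∀ u, F u ≠ 0 := fun u => (hFpos u).ne'
  have hinvcont : Continuous fun u => (F u)⁻¹ := hF.inv₀ hFne
  set G : ℝ → ℝ := fun u => ∫ s in u₀..u, (F s)⁻¹ with hGdef
  have hG' : ∀ u, HasDerivAt G ((F u)⁻¹) u := by
    intro u
    exact intervalIntegral.integral_hasDerivAt_right
      (hinvcont.intervalIntegrable _ _)
      (hinvcont.stronglyMeasurableAtFilter _ _) hinvcont.continuousAt
  have hGderiv : ∀ u, deriv G u = (F u)⁻¹ := fun u => (hG' u).deriv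
  have hGmono : StrictMono G := by
    apply strictMono_of_deriv_pos
    intro u; rw [hGderiv u]; exact inv_pos.2 (hFpos u)
  have hGcont : Continuous G := by
    refine continuous_iff_continuousAt.2 fun u => (hG' u).continuousAt
  have hMpos : 0 < M := lt_of_lt_of_le hδ (le_trans (hlb u₀) (hub u₀))
  -- lower/upper linear bounds on G
  have hGlb : ∀ u ≥ u₀, (u - u₀) / M ≤ G u := by
    intro u hu
    have : ∫ s in u₀..u, M⁻¹ ≤ ∫ s in u₀..u, (F s)⁻¹ := by
      apply intervalIntegral.integral_mono_on hu
        (intervalIntegrable_const) (hinvcont.intervalIntegrable _ _)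
      intro x _
      exact inv_anti₀ (hFpos x) (hub x)
    simpa [intervalIntegral.integral_const, smul_eq_mul, div_eq_mul_inv] using this
  have hGub : ∀ u ≤ u₀, G u ≤ (u - u₀) / M := by
    intro u hu
    have : ∫ s in u..u₀, M⁻¹ ≤ ∫ s in u..u₀, (F s)⁻¹ := by
      apply intervalIntegral.integral_mono_on hu
        (intervalIntegrable_const) (hinvcont.intervalIntegrable _ _)
      intro x _
      exact inv_anti₀ (hFpos x) (hub x)
    have h2 : G u = -∫ s in u..u₀, (F s)⁻¹ := by
      rw [hGdef]; simp [intervalIntegral.integral_symm u₀ u]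
    rw [h2]
    have h3 : (u₀ - u) / M ≤ ∫ s in u..u₀, (F s)⁻¹ := by
      simpa [intervalIntegral.integral_const, smul_eq_mul, div_eq_mul_inv] using this
    have h4 : (u - u₀) / M = -((u₀ - u) / M) := by ring
    rw [h4]; linarith
  have hlin_top : Tendsto (fun u : ℝ => (u - u₀) / M) atTop atTop :=
    (tendsto_atTop_add_const_right _ (-u₀) tendsto_id).atTop_div_const hMpos
  have hlin_bot : Tendsto (fun u : ℝ => (u - u₀) / M) atBot atBot :=
    (tendsto_atBot_add_const_right _ (-u₀) tendsto_id).atBot_div_const hMpos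
  have htop : Tendsto G atTop atTop := by
    apply tendsto_atTop_mono' atTop _ hlin_top
    filter_upwards [eventually_ge_atTop u₀] with u hu
    exact hGlb u hu
  have hbot : Tendsto G atBot atBot := by
    apply tendsto_atBot_mono' atBot _ hlin_bot
    filter_upwards [eventually_le_atBot u₀] with u hu
    exact hGub u hu
  have hGsurj : Function.Surjective G := hGcont.surjective htop hbot
  set e : ℝ ≃o ℝ := StrictMono.orderIsoOfSurjective G hGmono hGsurj with he
  have hecoe : ∀ u, e u = G u := fun u => rfl
  set U : ℝ → ℝ := fun t => e.symm (t - t₀) with hU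
  have hGu₀ : G u₀ = 0 := by simp [hGdef]
  have hU₀ : U t₀ = u₀ := by
    have : e u₀ = 0 := by rw [hecoe, hGu₀]
    rw [hU]; simp only [sub_self]
    rw [← this, e.symm_apply_apply]
  have hsymm_cont : Continuous (e.symm : ℝ → ℝ) := OrderIso.continuous _
  have hUderiv : ∀ t, HasDerivAt U (F (U t)) t := by
    intro t
    have hinv : ∀ᶠ y in nhds t, (fun u => G u + t₀) (U y) = y := by
      filter_upwards with y
      show G (e.symm (y - t₀)) + t₀ = y
      have : G (e.symm (y - t₀)) = e (e.symm (y - t₀)) := (hecoe _).symm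
      rw [this, e.apply_symm_apply]; ring
    have hUcont : ContinuousAt U t := by
      apply Continuous.continuousAt
      exact hsymm_cont.comp (continuous_id.sub continuous_const)
    have hf : HasDerivAt (fun u => G u + t₀) ((F (U t))⁻¹) (U t) :=
      (hG' (U t)).add_const t₀
    have := HasDerivAt.of_local_left_inverse hUcont hf (inv_ne_zero (hFne _)) hinv
    simpa using this
  have hUtop : Tendsto U atTop atTop := by
    rw [tendsto_atTop_atTop]
    intro b
    refine ⟨e b + t₀, fun x hx => ?_⟩
    show b ≤ e.symm (x - t₀)
    rw [e.le_symm_apply]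
    linarith
  exact ⟨U, hU₀, hUderiv, hUtop⟩
/-- `(V, C, U)` is a C¹ solution on `[-Tε, ∞)` of the modulation system
`V' = ε·8 a'(εU) C/((m+3) a(εU))`, `C' = ε·4 a'(εU) C V/((5-m) a(εU))`, `U' = V`,
with data `V(-Tε) = v₀`, `C(-Tε) = 1`, `U(-Tε) = -v₀ Tε`. -/
def IsModSol (m v₀ ε Tε : ℝ) (a : ℝ → ℝ) (V C U : ℝ → ℝ) : Prop :=
  ContDiffOn ℝ 1 V (Ici (-Tε)) ∧ ContDiffOn ℝ 1 C (Ici (-Tε)) ∧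
  ContDiffOn ℝ 1 U (Ici (-Tε)) ∧
  (∀ t ∈ Ici (-Tε), HasDerivWithinAt V
      (ε * (8 * deriv a (ε * U t) * C t / ((m + 3) * a (ε * U t)))) (Ici (-Tε)) t) ∧
  (∀ t ∈ Ici (-Tε), HasDerivWithinAt C
      (ε * (4 * deriv a (ε * U t) * C t * V t / ((5 - m) * a (ε * U t)))) (Ici (-Tε)) t) ∧
  (∀ t ∈ Ici (-Tε), HasDerivWithinAt U (V t) (Ici (-Tε)) t) ∧
  V (-Tε) = v₀ ∧ C (-Tε) = 1 ∧ U (-Tε) = -(v₀ * Tε)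

set_option maxHeartbeats 2000000 in
theorem stmt13 (m v₀ ε a₀ : ℝ) (hm2 : 2 ≤ m) (hm5 : m < 5) (hv₀ : 0 < v₀) (hε : 0 < ε)
    (ha₀ : 0 < a₀) (ha₀1 : a₀ < 1)
    (a : ℝ → ℝ) (ha : ContDiff ℝ 1 a)
    (haLB : ∀ r, a₀ < a r) (haUB : ∀ r, a r < 1) (ha' : ∀ r, deriv a r < 0)
    (halim1 : Tendsto a atBot (nhds 1)) (halim0 : Tendsto a atTop (nhds a₀))
    (hdecay : ∃ K > (0:ℝ), ∃ μ > (0:ℝ), ∀ r, |deriv a r| ≤ K * Real.exp (-μ * |r|))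
    (Tε lam0 A₀ c₀ cInf : ℝ)
    (hTε : Tε = ε ^ (-(1:ℝ) - 1/100) / v₀) (hlam0 : lam0 = (5 - m) / (m + 3))
    (hA₀ : A₀ = a (-(ε * v₀ * Tε))) (hc₀ : c₀ = 1 - v₀ ^ 2 / (4 * lam0))
    (hcInf : cInf = (a₀ / A₀) ^ ((4:ℝ) / (5 - m)))
    (hrefract : c₀ < cInf) :
    ∃ V C U : ℝ → ℝ,
      IsModSol m v₀ ε Tε a V C U ∧
      (∀ V' C' U' : ℝ → ℝ, IsModSol m v₀ ε Tε a V' C' U' →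
        EqOn V V' (Ici (-Tε)) ∧ EqOn C C' (Ici (-Tε)) ∧ EqOn U U' (Ici (-Tε))) ∧
      (∀ t ∈ Ici (-Tε), 0 < V t) ∧
      Tendsto U atTop atTop ∧
      Tendsto C atTop (nhds cInf) ∧
      Tendsto V atTop (nhds (Real.sqrt (4 * lam0 * (cInf - c₀)))) ∧
      0 < Real.sqrt (4 * lam0 * (cInf - c₀)) := by
  -- basic positivity facts
  have h5m : (0:ℝ) < 5 - m := by linarith
  have hm3 : (0:ℝ) < m + 3 := by linarith
  have hl0 : 0 < lam0 := by rw [hlam0]; positivity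
  have apos : ∀ r, 0 < a r := fun r => lt_trans ha₀ (haLB r)
  have ane : ∀ r, a r ≠ 0 := fun r => (apos r).ne'
  have adiff : Differentiable ℝ a := ha.differentiable one_ne_zero
  have acont : Continuous a := ha.continuous
  have acont' : Continuous (deriv a) := ha.continuous_deriv le_rfl
  obtain ⟨p, hp⟩ : ∃ p : ℝ, p = 4 / (5 - m) := ⟨_, rfl⟩
  have hp0 : 0 < p := by rw [hp]; positivity
  obtain ⟨u₀, hu₀⟩ : ∃ u₀ : ℝ, u₀ = -(v₀ * Tε) := ⟨_, rfl⟩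
  have hA₀pos : 0 < A₀ := by rw [hA₀]; exact apos _
  have hA₀a₀ : a₀ < A₀ := by rw [hA₀]; exact haLB _
  have hau₀ : a (ε * u₀) = A₀ := by rw [hu₀, hA₀]; ring_nf
  obtain ⟨Cfun, hCfun⟩ : ∃ Cf : ℝ → ℝ, Cf = fun u => (a (ε * u) / A₀) ^ p := ⟨_, rfl⟩
  have hCfx : ∀ u, Cfun u = (a (ε * u) / A₀) ^ p := fun u => by rw [hCfun]
  have hbase_pos : ∀ u, 0 < a (ε * u) / A₀ := fun u => div_pos (apos _) hA₀pos
  have hCpos : ∀ u, 0 < Cfun u := fun u => by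
    rw [hCfx]; exact Real.rpow_pos_of_pos (hbase_pos u) _
  have hcInf' : cInf = (a₀ / A₀) ^ p := by rw [hcInf, hp]
  have hClb : ∀ u, cInf < Cfun u := by
    intro u
    rw [hCfx, hcInf']
    exact Real.rpow_lt_rpow (le_of_lt (div_pos ha₀ hA₀pos))
      ((div_lt_div_iff_of_pos_right hA₀pos).2 (haLB _)) hp0
  obtain ⟨Cm, hCm⟩ : ∃ Cm : ℝ, Cm = (1 / A₀) ^ p := ⟨_, rfl⟩
  have hCub : ∀ u, Cfun u < Cm := by
    intro u
    rw [hCfx, hCm]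
    exact Real.rpow_lt_rpow (le_of_lt (hbase_pos u))
      ((div_lt_div_iff_of_pos_right hA₀pos).2 (haUB _)) hp0
  have hc₀Cm : c₀ < Cm := lt_trans (lt_trans hrefract (hClb 0)) (hCub 0)
  obtain ⟨F, hF⟩ : ∃ F : ℝ → ℝ, F = fun u => Real.sqrt (4 * lam0 * (Cfun u - c₀)) := ⟨_, rfl⟩
  have hFx : ∀ u, F u = Real.sqrt (4 * lam0 * (Cfun u - c₀)) := fun u => by rw [hF]
  have harg_pos : ∀ u, 0 < 4 * lam0 * (Cfun u - c₀) := fun u =>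
    mul_pos (by linarith) (by have := hClb u; linarith)
  have hdl_pos : (0:ℝ) < 4 * lam0 * (cInf - c₀) := mul_pos (by linarith) (by linarith)
  have hδpos : 0 < Real.sqrt (4 * lam0 * (cInf - c₀)) := Real.sqrt_pos.2 hdl_pos
  have hFlb : ∀ u, Real.sqrt (4 * lam0 * (cInf - c₀)) ≤ F u := by
    intro u
    rw [hFx]
    exact Real.sqrt_le_sqrt (mul_le_mul_of_nonneg_left (by have := hClb u; linarith) (by linarith))
  have hFub : ∀ u, F u ≤ Real.sqrt (4 * lam0 * (Cm - c₀)) := by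
    intro u
    rw [hFx]
    exact Real.sqrt_le_sqrt (mul_le_mul_of_nonneg_left (by have := hCub u; linarith) (by linarith))
  have hFpos : ∀ u, 0 < F u := fun u => lt_of_lt_of_le hδpos (hFlb u)
  have hFsq : ∀ u, F u ^ 2 = 4 * lam0 * (Cfun u - c₀) := fun u => by
    rw [hFx]; exact Real.sq_sqrt (harg_pos u).le
  -- derivative of u ↦ a (ε u)
  have haε : ∀ u : ℝ, HasDerivAt (fun u => a (ε * u)) (deriv a (ε * u) * ε) u := by
    intro u
    have h1 : HasDerivAt (fun u : ℝ => ε * u) (ε * 1) u := (hasDerivAt_id u).const_mul ε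
    have h2 := (adiff (ε * u)).hasDerivAt.comp u h1
    rw [mul_one] at h2
    exact h2
  obtain ⟨Cd, hCd⟩ : ∃ Cd : ℝ → ℝ,
      Cd = fun u => p * Cfun u * (ε * deriv a (ε * u)) / a (ε * u) := ⟨_, rfl⟩
  have hCdx : ∀ u, Cd u = p * Cfun u * (ε * deriv a (ε * u)) / a (ε * u) := fun u => by rw [hCd]
  have hCfun' : ∀ u, HasDerivAt Cfun (Cd u) u := by
    intro u
    have h1 : HasDerivAt (fun u => a (ε * u) / A₀) (deriv a (ε * u) * ε / A₀) u :=
      (haε u).div_const A₀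
    have h2 := h1.rpow_const (p := p) (Or.inl (hbase_pos u).ne')
    have h3 : deriv a (ε * u) * ε / A₀ * p * (a (ε * u) / A₀) ^ (p - 1) = Cd u := by
      rw [Real.rpow_sub_one (hbase_pos u).ne', hCdx, hCfx]
      field_simp
    rw [hCfun]
    exact h3 ▸ h2
  have hCcont : Continuous Cfun :=
    continuous_iff_continuousAt.2 fun u => (hCfun' u).continuousAt
  have hCdcont : Continuous Cd := by
    rw [hCd]
    exact (((continuous_const.mul hCcont).mul
      (continuous_const.mul (acont'.comp (continuous_const.mul continuous_id)))).div
      (acont.comp (continuous_const.mul continuous_id)) fun u => ane _)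
  have hF' : ∀ u, HasDerivAt F (4 * lam0 * Cd u / (2 * F u)) u := by
    intro u
    have h1 : HasDerivAt (fun u => 4 * lam0 * (Cfun u - c₀)) (4 * lam0 * Cd u) u :=
      ((hCfun' u).sub_const c₀).const_mul (4 * lam0)
    have h2 := h1.sqrt (harg_pos u).ne'
    have h4 : 4 * lam0 * Cd u / (2 * F u)
        = 4 * lam0 * Cd u / (2 * Real.sqrt (4 * lam0 * (Cfun u - c₀))) := by rw [hFx]
    rw [h4, hF]
    exact h2
  have hFcont : Continuous F :=
    continuous_iff_continuousAt.2 fun u => (hF' u).continuousAt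
  -- global solution U of U' = F(U)
  obtain ⟨U, hU₀, hU', hUtop⟩ := exists_global_ode_sol F hFcont _ _ u₀ (-Tε) hδpos hFlb hFub
  have hUcont : Continuous U := continuous_iff_continuousAt.2 fun t => (hU' t).continuousAt
  have hCfu₀ : Cfun u₀ = 1 := by rw [hCfx, hau₀, div_self hA₀pos.ne', Real.one_rpow]
  have hFu₀ : F u₀ = v₀ := by
    rw [hFx, hCfu₀]
    have h1 : 4 * lam0 * (1 - c₀) = v₀ ^ 2 := by
      rw [hc₀]; field_simp; ring
    rw [h1, Real.sqrt_sq hv₀.le]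
  -- the candidate solution
  obtain ⟨Vv, hVv⟩ : ∃ Vv : ℝ → ℝ, Vv = fun t => F (U t) := ⟨_, rfl⟩
  obtain ⟨Cc, hCc⟩ : ∃ Cc : ℝ → ℝ, Cc = fun t => Cfun (U t) := ⟨_, rfl⟩
  have hVvx : ∀ t, Vv t = F (U t) := fun t => by rw [hVv]
  have hCcx : ∀ t, Cc t = Cfun (U t) := fun t => by rw [hCc]
  have hUd : ∀ t, HasDerivAt U (Vv t) t := fun t => (hVvx t) ▸ hU' t
  have hCcd : ∀ t, HasDerivAt Cc
      (ε * (4 * deriv a (ε * U t) * Cc t * Vv t / ((5 - m) * a (ε * U t)))) t := by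
    intro t
    have h1 := (hCfun' (U t)).comp t (hU' t)
    have h1' : HasDerivAt Cc (Cd (U t) * F (U t)) t := by rw [hCc]; exact h1
    have h2 : Cd (U t) * F (U t)
        = ε * (4 * deriv a (ε * U t) * Cc t * Vv t / ((5 - m) * a (ε * U t))) := by
      rw [hCdx, hCcx, hVvx, hp]
      field_simp [ane (ε * U t), h5m.ne']
    exact h2 ▸ h1'
  have hVvd : ∀ t, HasDerivAt Vv
      (ε * (8 * deriv a (ε * U t) * Cc t / ((m + 3) * a (ε * U t)))) t := by
    intro t
    have h1 := (hF' (U t)).comp t (hU' t)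
    have h1' : HasDerivAt Vv (4 * lam0 * Cd (U t) / (2 * F (U t)) * F (U t)) t := by
      rw [hVv]; exact h1
    have h2 : 4 * lam0 * Cd (U t) / (2 * F (U t)) * F (U t)
        = ε * (8 * deriv a (ε * U t) * Cc t / ((m + 3) * a (ε * U t))) := by
      rw [hCdx, hCcx, hlam0, hp]
      field_simp [ane (ε * U t), h5m.ne', hm3.ne', (hFpos (U t)).ne']
      ring
    exact h2 ▸ h1'
  have hVv0 : Vv (-Tε) = v₀ := by rw [hVvx, hU₀, hFu₀]
  have hCc0 : Cc (-Tε) = 1 := by rw [hCcx, hU₀, hCfu₀]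
  have hU0' : U (-Tε) = -(v₀ * Tε) := by rw [hU₀, hu₀]
  -- regularity
  have hVvcont : Continuous Vv := by rw [hVv]; exact hFcont.comp hUcont
  have hCccont : Continuous Cc := by rw [hCc]; exact hCcont.comp hUcont
  have haU : Continuous (fun t => a (ε * U t)) :=
    acont.comp (continuous_const.mul hUcont)
  have haU' : Continuous (fun t => deriv a (ε * U t)) :=
    acont'.comp (continuous_const.mul hUcont)
  have haUne : ∀ t, (m + 3) * a (ε * U t) ≠ 0 := fun t => mul_ne_zero hm3.ne' (ane _)
  have haUne' : ∀ t, (5 - m) * a (ε * U t) ≠ 0 := fun t => mul_ne_zero h5m.ne' (ane _)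
  have hUsm : ContDiff ℝ 1 U := contDiff_of_hasDerivAt_continuous hUd hVvcont
  have hCsm : ContDiff ℝ 1 Cc := by
    apply contDiff_of_hasDerivAt_continuous hCcd
    exact continuous_const.mul
      ((((continuous_const.mul haU').mul hCccont).mul hVvcont).div
        (continuous_const.mul haU) haUne')
  have hVsm : ContDiff ℝ 1 Vv := by
    apply contDiff_of_hasDerivAt_continuous hVvd
    exact continuous_const.mul
      (((continuous_const.mul haU').mul hCccont).div
        (continuous_const.mul haU) haUne)
  -- limits
  have hmulT : Tendsto (fun u : ℝ => ε * u) atTop atTop := tendsto_id.const_mul_atTop hε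
  have haT : Tendsto (fun u => a (ε * u)) atTop (nhds a₀) := halim0.comp hmulT
  have hCflim : Tendsto Cfun atTop (nhds cInf) := by
    rw [hCfun, hcInf']
    exact (haT.div_const A₀).rpow_const (Or.inr hp0.le)
  have hCclim : Tendsto Cc atTop (nhds cInf) := by
    rw [hCc]; exact hCflim.comp hUtop
  have hFlim : Tendsto F atTop (nhds (Real.sqrt (4 * lam0 * (cInf - c₀)))) := by
    rw [hF]
    exact (Real.continuous_sqrt.tendsto _).comp ((hCflim.sub_const c₀).const_mul (4 * lam0))
  have hVvlim : Tendsto Vv atTop (nhds (Real.sqrt (4 * lam0 * (cInf - c₀)))) := by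
    rw [hVv]; exact hFlim.comp hUtop
  have hVvpos : ∀ t ∈ Ici (-Tε), 0 < Vv t := fun t _ => by
    rw [hVvx]; exact hFpos (U t)
  refine ⟨Vv, Cc, U,
    ⟨hVsm.contDiffOn, hCsm.contDiffOn, hUsm.contDiffOn,
      fun t _ => (hVvd t).hasDerivWithinAt, fun t _ => (hCcd t).hasDerivWithinAt,
      fun t _ => (hUd t).hasDerivWithinAt, hVv0, hCc0, hU0'⟩,
    ?_, hVvpos, hUtop, hCclim, hVvlim, hδpos⟩
  -- uniqueness
  intro V1 C1 U1 hsol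
  obtain ⟨hV1sm, hC1sm, hU1sm, hV1d, hC1d, hU1d, hV1i, hC1i, hU1i⟩ := hsol
  -- the conserved quantity W = C1 · Ψ(U1)
  obtain ⟨Psi, hPsi⟩ : ∃ f : ℝ → ℝ, f = fun u => (A₀ / a (ε * u)) ^ p := ⟨_, rfl⟩
  have hPsix : ∀ u, Psi u = (A₀ / a (ε * u)) ^ p := fun u => by rw [hPsi]
  have hbase2 : ∀ u, 0 < A₀ / a (ε * u) := fun u => div_pos hA₀pos (apos _)
  have hPsipos : ∀ u, 0 < Psi u := fun u => by
    rw [hPsix]; exact Real.rpow_pos_of_pos (hbase2 u) _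
  have hPsi' : ∀ u, HasDerivAt Psi (-(p * Psi u * (ε * deriv a (ε * u)) / a (ε * u))) u := by
    intro u
    have h1 : HasDerivAt (fun u => A₀ / a (ε * u))
        ((0 * a (ε * u) - A₀ * (deriv a (ε * u) * ε)) / a (ε * u) ^ 2) u :=
      (hasDerivAt_const u A₀).div (haε u) (ane _)
    have h2 := h1.rpow_const (p := p) (Or.inl (hbase2 u).ne')
    have h3 : (0 * a (ε * u) - A₀ * (deriv a (ε * u) * ε)) / a (ε * u) ^ 2 * p
          * (A₀ / a (ε * u)) ^ (p - 1)
        = -(p * Psi u * (ε * deriv a (ε * u)) / a (ε * u)) := by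
      rw [Real.rpow_sub_one (hbase2 u).ne', hPsix]
      field_simp [ane (ε * u)]
      ring
    have h2' : HasDerivAt Psi ((0 * a (ε * u) - A₀ * (deriv a (ε * u) * ε)) / a (ε * u) ^ 2
        * p * (A₀ / a (ε * u)) ^ (p - 1)) u := by rw [hPsi]; exact h2
    exact h3 ▸ h2'
  have hPsicont : Continuous Psi :=
    continuous_iff_continuousAt.2 fun u => (hPsi' u).continuousAt
  have hPsiu₀ : Psi u₀ = 1 := by rw [hPsix, hau₀, div_self hA₀pos.ne', Real.one_rpow]
  have hCfPsi : ∀ u, Cfun u * Psi u = 1 := by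
    intro u
    rw [hCfx, hPsix, ← Real.mul_rpow (hbase_pos u).le (hbase2 u).le]
    rw [div_mul_div_comm, mul_comm]
    rw [div_self (mul_ne_zero hA₀pos.ne' (ane _)), Real.one_rpow]
  obtain ⟨W, hW⟩ : ∃ W : ℝ → ℝ, W = fun t => C1 t * Psi (U1 t) := ⟨_, rfl⟩
  have hWd : ∀ t ∈ Ici (-Tε), HasDerivWithinAt W 0 (Ici (-Tε)) t := by
    intro t ht
    have hc := hC1d t ht
    have hu := (hPsi' (U1 t)).comp_hasDerivWithinAt t (hU1d t ht)
    have h1 := hc.mul hu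
    have h1' : HasDerivWithinAt W
        (ε * (4 * deriv a (ε * U1 t) * C1 t * V1 t / ((5 - m) * a (ε * U1 t))) * Psi (U1 t)
          + C1 t * (-(p * Psi (U1 t) * (ε * deriv a (ε * U1 t)) / a (ε * U1 t)) * V1 t))
        (Ici (-Tε)) t := by
      rw [hW]; exact h1
    have h2 : ε * (4 * deriv a (ε * U1 t) * C1 t * V1 t / ((5 - m) * a (ε * U1 t))) * Psi (U1 t)
          + C1 t * (-(p * Psi (U1 t) * (ε * deriv a (ε * U1 t)) / a (ε * U1 t)) * V1 t)
        = 0 := by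
      rw [hp]
      field_simp [ane (ε * U1 t), h5m.ne']
      ring
    exact h2 ▸ h1'
  have hWcont : ContinuousOn W (Ici (-Tε)) := by
    rw [hW]
    exact (hC1sm.continuousOn).mul (hPsicont.comp_continuousOn (hU1sm.continuousOn))
  have hWconst := const_of_deriv_zero_Ici hWcont hWd
  have hW0 : W (-Tε) = 1 := by
    rw [hW]
    show C1 (-Tε) * Psi (U1 (-Tε)) = 1
    rw [hC1i, hU1i, ← hu₀, hPsiu₀, one_mul]
  have hC1eq : ∀ t ∈ Ici (-Tε), C1 t = Cfun (U1 t) := by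
    intro t ht
    have h1 : C1 t * Psi (U1 t) = 1 := by
      have := hWconst t ht
      rw [hW0] at this
      rw [hW] at this
      exact this
    exact mul_right_cancel₀ (hPsipos (U1 t)).ne' (h1.trans (hCfPsi (U1 t)).symm)
  -- the conserved quantity E = V1² − 4·lam0·C1
  obtain ⟨E, hE⟩ : ∃ E : ℝ → ℝ, E = fun t => V1 t ^ 2 - 4 * lam0 * C1 t := ⟨_, rfl⟩
  have hEd : ∀ t ∈ Ici (-Tε), HasDerivWithinAt E 0 (Ici (-Tε)) t := by
    intro t ht
    have h1 := ((hV1d t ht).pow 2).sub ((hC1d t ht).const_mul (4 * lam0))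
    have h1' : HasDerivWithinAt E
        ((2 : ℕ) * V1 t ^ (2 - 1) * (ε * (8 * deriv a (ε * U1 t) * C1 t / ((m + 3) * a (ε * U1 t))))
          - 4 * lam0 * (ε * (4 * deriv a (ε * U1 t) * C1 t * V1 t / ((5 - m) * a (ε * U1 t)))))
        (Ici (-Tε)) t := by
      rw [hE]; exact h1
    have h2 : (2 : ℕ) * V1 t ^ (2 - 1) * (ε * (8 * deriv a (ε * U1 t) * C1 t / ((m + 3) * a (ε * U1 t))))
          - 4 * lam0 * (ε * (4 * deriv a (ε * U1 t) * C1 t * V1 t / ((5 - m) * a (ε * U1 t))))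
        = 0 := by
      rw [hlam0]
      field_simp [ane (ε * U1 t), h5m.ne', hm3.ne']
      ring
    exact h2 ▸ h1'
  have hEcont : ContinuousOn E (Ici (-Tε)) := by
    rw [hE]
    exact ((hV1sm.continuousOn).pow 2).sub (continuousOn_const.mul (hC1sm.continuousOn))
  have hEconst := const_of_deriv_zero_Ici hEcont hEd
  have hE0 : E (-Tε) = v₀ ^ 2 - 4 * lam0 := by
    rw [hE]
    show V1 (-Tε) ^ 2 - 4 * lam0 * C1 (-Tε) = v₀ ^ 2 - 4 * lam0
    rw [hV1i, hC1i, mul_one]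
  have hlamc₀ : 4 * lam0 * c₀ = 4 * lam0 - v₀ ^ 2 := by
    rw [hc₀]; field_simp
  have hV1sq : ∀ t ∈ Ici (-Tε), V1 t ^ 2 = 4 * lam0 * (Cfun (U1 t) - c₀) := by
    intro t ht
    have h12 : V1 t ^ 2 - 4 * lam0 * C1 t = v₀ ^ 2 - 4 * lam0 := by
      have h1 := (hEconst t ht).trans hE0
      rwa [hE] at h1
    have h3 := hC1eq t ht
    linear_combination h12 + hlamc₀ + 4 * lam0 * h3
  have hV1ne : ∀ t ∈ Ici (-Tε), V1 t ≠ 0 := by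
    intro t ht h0
    have h1 := hV1sq t ht
    rw [h0] at h1
    have h2 := hClb (U1 t)
    have h3 : 0 < 4 * lam0 * (Cfun (U1 t) - c₀) := mul_pos (by linarith) (by linarith)
    simp only [ne_eq, OfNat.ofNat_ne_zero, not_false_eq_true, zero_pow] at h1
    linarith
  have hV1pos : ∀ t ∈ Ici (-Tε), 0 < V1 t := by
    intro t ht
    by_contra hle
    have hlt : V1 t < 0 := lt_of_le_of_ne (not_lt.1 hle) (hV1ne t ht)
    have hmem : (0:ℝ) ∈ Icc (V1 t) (V1 (-Tε)) := by
      constructor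
      · exact hlt.le
      · rw [hV1i]; exact hv₀.le
    obtain ⟨c, hc, hc0⟩ :=
      intermediate_value_Icc' (mem_Ici.1 ht) (hV1sm.continuousOn.mono Icc_subset_Ici_self) hmem
    exact hV1ne c (mem_Ici.2 hc.1) hc0
  have hV1F : ∀ t ∈ Ici (-Tε), V1 t = F (U1 t) := by
    intro t ht
    have h1 := hV1sq t ht
    rw [hFx, ← h1, Real.sqrt_sq (hV1pos t ht).le]
  -- F is globally Lipschitz
  obtain ⟨K, hK, μ, hμ, hKd⟩ := hdecay
  have ha'le : ∀ r, |deriv a r| ≤ K := by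
    intro r
    refine le_trans (hKd r) ?_
    have h1 : Real.exp (-μ * |r|) ≤ 1 :=
      Real.exp_le_one_iff.2 (by rw [neg_mul, neg_nonpos]; positivity)
    calc K * Real.exp (-μ * |r|) ≤ K * 1 := mul_le_mul_of_nonneg_left h1 hK.le
    _ = K := mul_one K
  obtain ⟨B, hB⟩ : ∃ B : ℝ, B = p * Cm * (ε * K) / a₀ := ⟨_, rfl⟩
  have hCmpos : 0 < Cm := lt_trans (hCpos 0) (hCub 0)
  have hBpos : 0 < B := by rw [hB]; positivity
  have hCdb : ∀ u, |Cd u| ≤ B := by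
    intro u
    rw [hCdx, hB, abs_div, abs_of_pos (apos _)]
    simp only [abs_mul]
    rw [abs_of_pos hp0, abs_of_pos (hCpos u), abs_of_pos hε]
    apply div_le_div₀ (by positivity) ?_ ha₀ (haLB _).le
    have h1 : p * Cfun u ≤ p * Cm := mul_le_mul_of_nonneg_left (hCub u).le hp0.le
    have h2 : ε * |deriv a (ε * u)| ≤ ε * K := mul_le_mul_of_nonneg_left (ha'le _) hε.le
    exact mul_le_mul h1 h2 (by positivity) (by positivity)
  obtain ⟨L, hL⟩ : ∃ L : ℝ,
      L = 4 * lam0 * B / (2 * Real.sqrt (4 * lam0 * (cInf - c₀))) := ⟨_, rfl⟩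
  have hLpos : 0 < L := by rw [hL]; positivity
  have hFlip : LipschitzWith L.toNNReal F := by
    apply lipschitzWith_of_nnnorm_deriv_le (fun u => (hF' u).differentiableAt)
    intro x
    rw [← NNReal.coe_le_coe, coe_nnnorm, Real.norm_eq_abs, Real.coe_toNNReal _ hLpos.le, (hF' x).deriv, hL]
    rw [abs_div, abs_of_pos (mul_pos two_pos (hFpos x)), abs_mul,
      abs_of_pos (show (0:ℝ) < 4 * lam0 by linarith)]
    apply div_le_div₀ (by positivity)
      (mul_le_mul_of_nonneg_left (hCdb x) (by linarith)) (by positivity)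
    linarith [hFlb x]
  -- uniqueness of U via Grönwall
  have hUinit : U (-Tε) = U1 (-Tε) := by rw [hU₀, hu₀, hU1i]
  have hUU1 : EqOn U U1 (Ici (-Tε)) := by
    intro t ht
    refine ODE_solution_unique (v := fun _ : ℝ => F) (fun _ => hFlip)
      (hUcont.continuousOn) (fun τ _ => (hU' τ).hasDerivWithinAt)
      (hU1sm.continuousOn.mono Icc_subset_Ici_self) ?_ hUinit ⟨mem_Ici.1 ht, le_rfl⟩
    intro τ hτ
    have h1 := hU1d τ (mem_Ici.2 hτ.1)
    rw [hV1F τ (mem_Ici.2 hτ.1)] at h1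
    exact h1.mono (Ici_subset_Ici.mpr hτ.1)
  refine ⟨?_, ?_, hUU1⟩
  · intro t ht
    rw [hVvx, hUU1 ht, ← hV1F t ht]
  · intro t ht
    rw [hCcx, hUU1 ht, ← hC1eq t ht]
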